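/- Let p_5(1) = (30/π^4) ∫_0^∞ I_0(t)^2 K_0(t)^4 t dt and p_5'(0⁺) = (30/π^4) ∫_0^∞ I_0(t) K_0(t)^4 t dt. Then p_5'(0⁺) < p_5(1); more precisely, p_5(1) - p_5'(0⁺) ≥ (15/(2π^4)) ∫_0^∞ I_0(t) K_0(t)^4 t^3 dt > 0. -/

import Mathlib

open Real MeasureTheory Set

/-- Modified Bessel function of the first kind, order zero. -/
noncomputable def besselI0 (t : ℝ) : ℝ :=
  (1 / π) * ∫ θ in (0:ℝ)..π, Real.exp (t * Real.cos θ)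

/-- Modified Bessel function of the second kind, order zero. -/
noncomputable def besselK0 (t : ℝ) : ℝ :=
  ∫ u in Set.Ioi (0:ℝ), Real.exp (-t * Real.cosh u)

lemma cosh_ge_half_exp (u : ℝ) : Real.exp u / 2 ≤ Real.cosh u := by
  rw [Real.cosh_eq]
  have := (Real.exp_pos (-u)).le
  linarith

lemma cosh_ge (u : ℝ) : (1 + u) / 2 ≤ Real.cosh u :=
  le_trans (by have := Real.add_one_le_exp u; linarith) (cosh_ge_half_exp u)

lemma expK_meas (t : ℝ) : AEStronglyMeasurable (fun u => Real.exp (-t * Real.cosh u))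
    (volume.restrict (Ioi (0:ℝ))) :=
  ((Real.continuous_exp.comp (continuous_const.mul Real.continuous_cosh)).aestronglyMeasurable).restrict

lemma intK0 {t : ℝ} (ht : 0 < t) :
    IntegrableOn (fun u => Real.exp (-t * Real.cosh u)) (Ioi (0:ℝ)) := by
  have hb : IntegrableOn (fun u => Real.exp (-t/2) * Real.exp (-(t/2) * u)) (Ioi (0:ℝ)) :=
    (exp_neg_integrableOn_Ioi 0 (by positivity)).const_mul _
  refine Integrable.mono hb (expK_meas t) ?_
  filter_upwards [ae_restrict_mem measurableSet_Ioi] with u hu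
  rw [Real.norm_eq_abs, Real.norm_eq_abs, Real.abs_exp,
    abs_of_pos (by positivity : (0:ℝ) < Real.exp (-t/2) * Real.exp (-(t/2)*u)), ← Real.exp_add]
  apply Real.exp_le_exp.2
  nlinarith [cosh_ge u]

lemma integral_exp_quarter : ∫ u in Ioi (0:ℝ), Real.exp (-(u/4)) = 4 := by
  have := MeasureTheory.integral_comp_mul_right_Ioi (fun x => Real.exp (-x)) 0 (by norm_num : (0:ℝ) < 1/4)
  simp only [zero_mul, integral_exp_neg_Ioi, neg_zero, Real.exp_zero, smul_eq_mul, mul_one] at this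
  have h2 : ∀ u : ℝ, u * (1/4) = u/4 := fun u => by ring
  simp only [h2] at this
  rw [this]; norm_num

lemma sqrt_exp (x : ℝ) : Real.sqrt (Real.exp x) = Real.exp (x/2) := by
  rw [show Real.exp x = (Real.exp (x/2))^2 by rw [sq, ← Real.exp_add]; ring_nf,
    Real.sqrt_sq (Real.exp_pos _).le]

lemma ssqrt_le_exp {y : ℝ} (hy : 0 < y) : Real.sqrt (Real.sqrt y) ≤ Real.exp y := by
  rcases le_total y 1 with h | h
  · calc Real.sqrt (Real.sqrt y) ≤ 1 := Real.sqrt_le_one.2 (Real.sqrt_le_one.2 h)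
      _ ≤ Real.exp y := Real.one_le_exp hy.le
  · have h1 : Real.sqrt y ≤ y := (Real.sqrt_le_left hy.le).2 (by nlinarith)
    have h2 : Real.sqrt (Real.sqrt y) ≤ Real.sqrt y := Real.sqrt_le_sqrt h1
    nlinarith [Real.add_one_le_exp y]

lemma exp_neg_cosh_le {t u : ℝ} (ht : 0 < t) :
    Real.exp (-t * Real.cosh u) ≤ Real.sqrt (Real.sqrt (2/t)) * Real.exp (-(u/4)) := by
  set y := t/2 * Real.exp u with hydef
  have hy : 0 < y := by positivity
  have step1 : Real.exp (-t * Real.cosh u) ≤ Real.exp (-y) := by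
    apply Real.exp_le_exp.2
    have := cosh_ge_half_exp u
    rw [hydef]; nlinarith
  have step2 : Real.exp (-y) ≤ 1 / Real.sqrt (Real.sqrt y) := by
    rw [Real.exp_neg, inv_eq_one_div]
    exact one_div_le_one_div_of_le (by positivity) (ssqrt_le_exp hy)
  have step3 : 1 / Real.sqrt (Real.sqrt y) = Real.sqrt (Real.sqrt (2/t)) * Real.exp (-(u/4)) := by
    rw [one_div, ← Real.sqrt_inv, ← Real.sqrt_inv]
    have : y⁻¹ = (2/t) * Real.exp (-u) := by
      rw [hydef, Real.exp_neg, mul_inv, inv_div]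
    rw [this, Real.sqrt_mul (by positivity), sqrt_exp,
      Real.sqrt_mul (by positivity), sqrt_exp]
    congr 1
    ring
  calc Real.exp (-t * Real.cosh u) ≤ Real.exp (-y) := step1
    _ ≤ 1 / Real.sqrt (Real.sqrt y) := step2
    _ = _ := step3

lemma cosh_ge_quadratic (u : ℝ) : 1 + u^2/2 ≤ Real.cosh u := by
  have h1 : Real.cosh u = 1 + 2 * Real.sinh (u/2) ^ 2 := by
    have h2 := Real.cosh_two_mul (u/2)
    rw [show (2:ℝ)*(u/2) = u by ring] at h2
    nlinarith [Real.cosh_sq (u/2)]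
  rcases le_total 0 u with h | h
  · have : u/2 ≤ Real.sinh (u/2) := Real.self_le_sinh_iff.2 (by linarith)
    nlinarith
  · have h3 : Real.sinh (-(u/2)) = - Real.sinh (u/2) := Real.sinh_neg _
    have : -(u/2) ≤ Real.sinh (-(u/2)) := Real.self_le_sinh_iff.2 (by linarith)
    nlinarith

lemma K0_nonneg (t : ℝ) : 0 ≤ besselK0 t :=
  setIntegral_nonneg measurableSet_Ioi fun u _ => (Real.exp_pos _).le

lemma K0_le_small {t : ℝ} (ht : 0 < t) :
    besselK0 t ≤ Real.sqrt (Real.sqrt (2/t)) * 4 := by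
  have hi : IntegrableOn (fun u => Real.sqrt (Real.sqrt (2/t)) * Real.exp (-(u/4))) (Ioi (0:ℝ)) := by
    have : IntegrableOn (fun u => Real.exp (-(1/4:ℝ) * u)) (Ioi (0:ℝ)) :=
      exp_neg_integrableOn_Ioi 0 (by norm_num)
    have h4 : ∀ u : ℝ, -(1/4:ℝ) * u = -(u/4) := fun u => by ring
    simp only [h4] at this
    exact this.const_mul _
  calc besselK0 t ≤ ∫ u in Ioi (0:ℝ), Real.sqrt (Real.sqrt (2/t)) * Real.exp (-(u/4)) := by
        apply setIntegral_mono_on (intK0 ht) hi measurableSet_Ioi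
        intro u _
        exact exp_neg_cosh_le ht
    _ = Real.sqrt (Real.sqrt (2/t)) * 4 := by
        rw [MeasureTheory.integral_const_mul, integral_exp_quarter]

lemma K0_pow4_small {t : ℝ} (ht : 0 < t) : besselK0 t ^ 4 ≤ 512 / t := by
  have h1 : besselK0 t ^ 4 ≤ (Real.sqrt (Real.sqrt (2/t)) * 4) ^ 4 := by
    apply pow_le_pow_left₀ (K0_nonneg t) (K0_le_small ht)
  refine h1.trans ?_
  have h2 : (Real.sqrt (Real.sqrt (2/t)) * 4) ^ 4 = ((Real.sqrt (Real.sqrt (2/t)))^2)^2 * 256 := by ring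
  rw [h2, Real.sq_sqrt (Real.sqrt_nonneg _), Real.sq_sqrt (by positivity)]
  rw [div_mul_eq_mul_div, mul_comm]
  norm_num

lemma K0_le_big {t : ℝ} (ht : 1 ≤ t) : besselK0 t ≤ 2 * Real.exp (-t) := by
  have ht0 : (0:ℝ) < t := by linarith
  have hi : IntegrableOn (fun u => Real.exp (-t) * Real.exp (-(1/2:ℝ) * u^2)) (Ioi (0:ℝ)) :=
    ((integrable_exp_neg_mul_sq (by norm_num : (0:ℝ) < 1/2)).integrableOn).const_mul _
  calc besselK0 t ≤ ∫ u in Ioi (0:ℝ), Real.exp (-t) * Real.exp (-(1/2:ℝ) * u^2) := by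
        apply setIntegral_mono_on (intK0 ht0) hi measurableSet_Ioi
        intro u _
        rw [← Real.exp_add]
        apply Real.exp_le_exp.2
        have h1 := cosh_ge_quadratic u
        nlinarith [sq_nonneg u]
    _ = Real.exp (-t) * (Real.sqrt (π / (1/2)) / 2) := by
        rw [MeasureTheory.integral_const_mul, integral_gaussian_Ioi]
    _ ≤ 2 * Real.exp (-t) := by
        have h2 : Real.sqrt (π / (1/2)) ≤ 4 := by
          rw [show (4:ℝ) = Real.sqrt 16 by rw [show (16:ℝ) = 4^2 by norm_num, Real.sqrt_sq]; norm_num]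
          apply Real.sqrt_le_sqrt
          nlinarith [Real.pi_le_four]
        nlinarith [Real.exp_pos (-t)]

lemma K0_pos {t : ℝ} (ht : 0 < t) : 0 < besselK0 t := by
  rw [besselK0, setIntegral_pos_iff_support_of_nonneg_ae]
  · have : Function.support (fun u => Real.exp (-t * Real.cosh u)) = Set.univ := by
      ext u; simp [Function.support, (Real.exp_pos _).ne']
    rw [this, Set.univ_inter]
    simp
  · filter_upwards with u using (Real.exp_pos _).le
  · exact intK0 ht

lemma K0_continuousAt {t₀ : ℝ} (ht : 0 < t₀) : ContinuousAt besselK0 t₀ := by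
  unfold besselK0
  apply continuousAt_of_dominated (bound := fun u => Real.exp (-(t₀/2) * Real.cosh u))
  · filter_upwards with t using expK_meas t
  · filter_upwards [Ioi_mem_nhds (show t₀/2 < t₀ by linarith)] with t htmem
    filter_upwards [ae_restrict_mem measurableSet_Ioi] with u hu
    rw [Real.norm_eq_abs, Real.abs_exp]
    apply Real.exp_le_exp.2
    have hc : (1:ℝ) ≤ Real.cosh u := Real.one_le_cosh u
    have : t₀/2 ≤ t := le_of_lt htmem
    nlinarith
  · exact intK0 (by linarith)
  · filter_upwards with u
    exact (Real.continuous_exp.comp (continuous_id.neg.mul continuous_const)).continuousAt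

lemma I0_integrand_cont (t : ℝ) : Continuous (fun θ : ℝ => Real.exp (t * Real.cos θ)) :=
  Real.continuous_exp.comp (continuous_const.mul Real.continuous_cos)

lemma I0_continuous : Continuous besselI0 := by
  have h : Continuous (fun t : ℝ => ∫ θ in Ioc (0:ℝ) π, Real.exp (t * Real.cos θ)) := by
    rw [continuous_iff_continuousAt]
    intro t₀
    apply continuousAt_of_dominated (bound := fun _ => Real.exp (|t₀| + 1))
    · filter_upwards with t using ((I0_integrand_cont t).aestronglyMeasurable).restrict
    · filter_upwards [Metric.ball_mem_nhds t₀ zero_lt_one] with t htmem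
      filter_upwards with θ
      rw [Real.norm_eq_abs, Real.abs_exp]
      apply Real.exp_le_exp.2
      have h1 : |t| ≤ |t₀| + 1 := by
        have := abs_sub_abs_le_abs_sub t t₀
        rw [Metric.mem_ball, Real.dist_eq] at htmem
        linarith
      calc t * Real.cos θ ≤ |t * Real.cos θ| := le_abs_self _
        _ = |t| * |Real.cos θ| := abs_mul _ _
        _ ≤ (|t₀| + 1) * 1 := by
            apply mul_le_mul h1 (Real.abs_cos_le_one θ) (abs_nonneg _) (by positivity)
        _ = |t₀| + 1 := mul_one _
    · exact integrableOn_const (by simp [measure_Ioc_lt_top])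
    · filter_upwards with θ
      exact (Real.continuous_exp.comp (continuous_id.mul continuous_const)).continuousAt
  have heq : ∀ t : ℝ, besselI0 t = (1/π) * ∫ θ in Ioc (0:ℝ) π, Real.exp (t * Real.cos θ) := by
    intro t
    rw [besselI0, intervalIntegral.integral_of_le Real.pi_pos.le]
  rw [funext heq]
  exact continuous_const.mul h

lemma I0_le_exp {t : ℝ} (ht : 0 ≤ t) : besselI0 t ≤ Real.exp t := by
  rw [besselI0]
  have h : (∫ θ in (0:ℝ)..π, Real.exp (t * Real.cos θ)) ≤ ∫ _ in (0:ℝ)..π, Real.exp t := by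
    apply intervalIntegral.integral_mono_on Real.pi_pos.le
      ((I0_integrand_cont t).intervalIntegrable _ _)
      (intervalIntegrable_const)
    intro θ _
    apply Real.exp_le_exp.2
    nlinarith [Real.cos_le_one θ]
  rw [intervalIntegral.integral_const, smul_eq_mul, sub_zero] at h
  have hπ := Real.pi_pos
  calc (1/π) * ∫ θ in (0:ℝ)..π, Real.exp (t * Real.cos θ) ≤ (1/π) * (π * Real.exp t) :=
        mul_le_mul_of_nonneg_left h (by positivity)
    _ = Real.exp t := by field_simp

lemma I0_symm (t : ℝ) :
    (∫ θ in (0:ℝ)..π, Real.exp (t * Real.cos θ)) = ∫ θ in (0:ℝ)..π, Real.exp (-t * Real.cos θ) := by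
  have h := intervalIntegral.integral_comp_sub_left (a := 0) (b := π)
    (fun θ => Real.exp (t * Real.cos θ)) π
  simp only [sub_self, sub_zero] at h
  rw [← h]
  apply intervalIntegral.integral_congr
  intro θ _
  simp [Real.cos_pi_sub, mul_neg, neg_mul]

lemma I0_lower {t : ℝ} (ht : 0 ≤ t) : 1 + t^2/4 ≤ besselI0 t := by
  have key : π * (2 + t^2/2) ≤ 2 * ∫ θ in (0:ℝ)..π, Real.exp (t * Real.cos θ) := by
    have h2 : (∫ θ in (0:ℝ)..π, (2 + t^2 * Real.cos θ^2))
        ≤ ∫ θ in (0:ℝ)..π, (Real.exp (t * Real.cos θ) + Real.exp (-t * Real.cos θ)) := by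
      apply intervalIntegral.integral_mono_on Real.pi_pos.le
      · exact (continuous_const.add (continuous_const.mul (Real.continuous_cos.pow 2))).intervalIntegrable _ _
      · exact ((I0_integrand_cont t).add (I0_integrand_cont (-t))).intervalIntegrable _ _
      · intro θ _
        have h3 := cosh_ge_quadratic (t * Real.cos θ)
        rw [Real.cosh_eq] at h3
        have h4 : Real.exp (-(t * Real.cos θ)) = Real.exp (-t * Real.cos θ) := by ring_nf
        rw [h4] at h3
        nlinarith
    have h5 : (∫ θ in (0:ℝ)..π, (2 + t^2 * Real.cos θ^2)) = 2*π + t^2 * (π/2) := by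
      rw [intervalIntegral.integral_add (f := fun _ => (2:ℝ)) (g := fun θ => t^2 * Real.cos θ^2) intervalIntegrable_const
        ((continuous_const.mul (Real.continuous_cos.pow 2)).intervalIntegrable _ _),
        intervalIntegral.integral_const_mul, integral_cos_sq]
      simp [Real.cos_pi, Real.sin_pi]
      ring
    have h6 : (∫ θ in (0:ℝ)..π, (Real.exp (t * Real.cos θ) + Real.exp (-t * Real.cos θ)))
        = 2 * ∫ θ in (0:ℝ)..π, Real.exp (t * Real.cos θ) := by
      rw [intervalIntegral.integral_add ((I0_integrand_cont t).intervalIntegrable _ _)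
        ((I0_integrand_cont (-t)).intervalIntegrable _ _), ← I0_symm t]
      ring
    rw [h5, h6] at h2
    nlinarith
  rw [besselI0]
  have hπ := Real.pi_pos
  have h7 : π * (1 + t^2/4) ≤ ∫ θ in (0:ℝ)..π, Real.exp (t * Real.cos θ) := by nlinarith
  calc 1 + t^2/4 = (1/π) * (π * (1 + t^2/4)) := by field_simp
    _ ≤ _ := mul_le_mul_of_nonneg_left h7 (by positivity)

lemma I0_ge_one {t : ℝ} (ht : 0 ≤ t) : 1 ≤ besselI0 t := by
  nlinarith [I0_lower ht, sq_nonneg t]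

lemma cube_le_exp {t : ℝ} (ht : 0 ≤ t) : t^3 ≤ 27 * Real.exp t := by
  have h1 : t/3 ≤ Real.exp (t/3) := by nlinarith [Real.add_one_le_exp (t/3)]
  have h2 : Real.exp t = Real.exp (t/3) ^ 3 := by
    rw [← Real.exp_nat_mul]; congr 1; push_cast; ring
  have h3 : (t/3)^3 ≤ Real.exp (t/3)^3 := by
    apply pow_le_pow_left₀ (by linarith) h1
  rw [h2]; nlinarith

lemma K0_contOn : ContinuousOn besselK0 (Ioi (0:ℝ)) := fun t ht =>
  (K0_continuousAt ht).continuousWithinAt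

lemma g_bound_small {t : ℝ} (ht : t ∈ Ioc (0:ℝ) 1) :
    besselI0 t ^ 2 * besselK0 t ^ 4 * (t + t^3) ≤ 10000 := by
  obtain ⟨ht0, ht1⟩ := ht
  have hI : besselI0 t ≤ 3 := by
    calc besselI0 t ≤ Real.exp t := I0_le_exp ht0.le
      _ ≤ Real.exp 1 := Real.exp_le_exp.2 ht1
      _ ≤ 3 := by nlinarith [Real.exp_one_lt_d9]
  have hI0 : (0:ℝ) ≤ besselI0 t := le_trans zero_le_one (I0_ge_one ht0.le)
  have hK : besselK0 t ^ 4 ≤ 512 / t := K0_pow4_small ht0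
  have hK0 : (0:ℝ) ≤ besselK0 t ^ 4 := by positivity
  have htt : t + t^3 ≤ 2*t := by
    nlinarith [mul_nonneg (mul_nonneg ht0.le (by linarith : (0:ℝ) ≤ 1 - t)) (by linarith : (0:ℝ) ≤ 1 + t)]
  calc besselI0 t ^ 2 * besselK0 t ^ 4 * (t + t^3) ≤ 9 * (512/t) * (2*t) := by
        apply mul_le_mul (mul_le_mul (by nlinarith) hK hK0 (by norm_num)) htt (by positivity)
        positivity
    _ = 9216 := by field_simp; ring
    _ ≤ 10000 := by norm_num

lemma g_bound_big {t : ℝ} (ht : t ∈ Ioi (1:ℝ)) :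
    besselI0 t ^ 2 * besselK0 t ^ 4 * (t + t^3) ≤ 10000 * Real.exp (-t) := by
  have ht1 : (1:ℝ) ≤ t := le_of_lt ht
  have ht0 : (0:ℝ) ≤ t := by linarith
  have hI : besselI0 t ^ 2 ≤ Real.exp t ^ 2 := by
    apply pow_le_pow_left₀ (le_trans zero_le_one (I0_ge_one ht0)) (I0_le_exp ht0)
  have hK : besselK0 t ^ 4 ≤ (2 * Real.exp (-t))^4 :=
    pow_le_pow_left₀ (K0_nonneg t) (K0_le_big ht1) 4
  have htt : t + t^3 ≤ 2*t^3 := by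
    nlinarith [mul_nonneg (mul_nonneg ht0 (by linarith : (0:ℝ) ≤ t - 1)) (by linarith : (0:ℝ) ≤ t + 1)]
  have hcube := cube_le_exp ht0
  have e1 : (0:ℝ) < Real.exp t := Real.exp_pos t
  have e2 : (0:ℝ) < Real.exp (-t) := Real.exp_pos (-t)
  have key : besselI0 t ^ 2 * besselK0 t ^ 4 * (t + t^3)
      ≤ (Real.exp t ^2) * ((2*Real.exp (-t))^4) * (2*t^3) := by
    apply mul_le_mul (mul_le_mul hI hK (by positivity) (by positivity)) htt (by positivity) (by positivity)
  refine key.trans ?_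
  have hee : Real.exp t * Real.exp (-t) = 1 := by rw [← Real.exp_add]; simp
  have h54 : t^3 * Real.exp (-t) ≤ 27 := by
    calc t^3 * Real.exp (-t) ≤ 27 * Real.exp t * Real.exp (-t) := by nlinarith
      _ = 27 := by rw [mul_assoc, hee, mul_one]
  calc (Real.exp t ^2) * ((2*Real.exp (-t))^4) * (2*t^3)
      = 32 * (Real.exp t * Real.exp (-t))^2 * (Real.exp (-t) * (t^3 * Real.exp (-t))) := by ring
    _ = 32 * (Real.exp (-t) * (t^3 * Real.exp (-t))) := by rw [hee]; ring
    _ ≤ 32 * (Real.exp (-t) * 27) := by nlinarith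
    _ ≤ 10000 * Real.exp (-t) := by nlinarith

lemma K0_contOn' : ContinuousOn besselK0 (Ioi (0:ℝ)) := fun t ht =>
  (K0_continuousAt ht).continuousWithinAt

lemma meas_f (a : ℕ) (q : ℝ → ℝ) (hq : Continuous q) : AEStronglyMeasurable
    (fun t => besselI0 t ^ a * besselK0 t ^ 4 * q t) (volume.restrict (Ioi (0:ℝ))) := by
  apply ContinuousOn.aestronglyMeasurable _ measurableSet_Ioi
  exact (((I0_continuous.pow a).continuousOn.mul (K0_contOn.pow 4)).mul hq.continuousOn)

lemma g_integrable : IntegrableOn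
    (fun t => besselI0 t ^ 2 * besselK0 t ^ 4 * (t + t^3)) (Ioi (0:ℝ)) := by
  have hsplit : Ioi (0:ℝ) = Ioc 0 1 ∪ Ioi 1 := (Ioc_union_Ioi_eq_Ioi (by norm_num)).symm
  rw [hsplit]
  have hmeas := meas_f 2 (fun t => t + t^3) (continuous_id.add (continuous_pow 3))
  apply IntegrableOn.union
  · have hc : IntegrableOn (fun _ : ℝ => (10000:ℝ)) (Ioc (0:ℝ) 1) :=
      integrableOn_const measure_Ioc_lt_top.ne
    apply Integrable.mono hc (hmeas.mono_set (by rw [hsplit]; exact subset_union_left))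
    filter_upwards [ae_restrict_mem measurableSet_Ioc] with t ht
    rw [Real.norm_eq_abs, Real.norm_eq_abs]
    have h0 : (0:ℝ) ≤ besselI0 t ^ 2 * besselK0 t ^ 4 * (t + t^3) := by
      have := I0_ge_one ht.1.le
      have := K0_nonneg t
      have := ht.1
      positivity
    rw [abs_of_nonneg h0, abs_of_nonneg (by norm_num : (0:ℝ) ≤ 10000)]
    exact g_bound_small ht
  · have hc : IntegrableOn (fun t : ℝ => (10000:ℝ) * Real.exp (-1 * t)) (Ioi (1:ℝ)) :=
      (exp_neg_integrableOn_Ioi 1 one_pos).const_mul _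
    apply Integrable.mono hc (hmeas.mono_set (by rw [hsplit]; exact subset_union_right))
    filter_upwards [ae_restrict_mem measurableSet_Ioi] with t ht
    have ht0 : (0:ℝ) < t := by have := ht; simp only [mem_Ioi] at this; linarith
    rw [Real.norm_eq_abs, Real.norm_eq_abs]
    have h0 : (0:ℝ) ≤ besselI0 t ^ 2 * besselK0 t ^ 4 * (t + t^3) := by
      have := I0_ge_one ht0.le
      have := K0_nonneg t
      positivity
    rw [abs_of_nonneg h0, abs_of_nonneg (by positivity)]
    have := g_bound_big ht
    calc besselI0 t ^ 2 * besselK0 t ^ 4 * (t + t^3) ≤ 10000 * Real.exp (-t) := g_bound_big ht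
      _ = 10000 * Real.exp (-1 * t) := by norm_num

lemma f_le_g {a : ℕ} (ha : a = 1 ∨ a = 2) {b : ℕ} (hb : b = 1 ∨ b = 3) {t : ℝ} (ht : 0 < t) :
    besselI0 t ^ a * besselK0 t ^ 4 * t ^ b ≤ besselI0 t ^ 2 * besselK0 t ^ 4 * (t + t^3) := by
  have hI1 := I0_ge_one ht.le
  have hI0 : (0:ℝ) ≤ besselI0 t := by linarith
  have hK := K0_nonneg t
  have hIa : besselI0 t ^ a ≤ besselI0 t ^ 2 := by
    rcases ha with h | h <;> subst h
    · nlinarith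
    · exact le_rfl
  have htb : t ^ b ≤ t + t^3 := by
    rcases hb with h | h <;> subst h
    · simp; positivity
    · nlinarith
  have h1 : (0:ℝ) ≤ besselK0 t ^ 4 := by positivity
  have h2 : (0:ℝ) ≤ besselI0 t ^ a := by positivity
  have h3 : (0:ℝ) ≤ t ^ b := by positivity
  apply mul_le_mul (mul_le_mul hIa le_rfl h1 (by positivity)) htb h3 (by positivity)

lemma f_integrable (a : ℕ) (ha : a = 1 ∨ a = 2) (b : ℕ) (hb : b = 1 ∨ b = 3) :
    IntegrableOn (fun t => besselI0 t ^ a * besselK0 t ^ 4 * t ^ b) (Ioi (0:ℝ)) := by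
  apply Integrable.mono g_integrable (meas_f a (fun t => t ^ b) (continuous_pow b))
  filter_upwards [ae_restrict_mem measurableSet_Ioi] with t ht
  have ht0 : (0:ℝ) < t := ht
  have hI1 := I0_ge_one ht0.le
  have hK := K0_nonneg t
  rw [Real.norm_eq_abs, Real.norm_eq_abs, abs_of_nonneg (by positivity), abs_of_nonneg (by
    have : (0:ℝ) ≤ besselI0 t := by linarith
    positivity)]
  exact f_le_g ha hb ht0

theorem stmt_12
    (p51 p5'0 : ℝ)
    (h1 : p51 = (30 / π^4) * ∫ t in Set.Ioi (0:ℝ),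
      (besselI0 t)^2 * (besselK0 t)^4 * t)
    (h0 : p5'0 = (30 / π^4) * ∫ t in Set.Ioi (0:ℝ),
      besselI0 t * (besselK0 t)^4 * t) :
    p5'0 < p51 ∧
    p51 - p5'0 ≥ (15 / (2 * π^4)) *
      ∫ t in Set.Ioi (0:ℝ), besselI0 t * (besselK0 t)^4 * t^3 ∧
    0 < (15 / (2 * π^4)) *
      ∫ t in Set.Ioi (0:ℝ), besselI0 t * (besselK0 t)^4 * t^3 := by
  have hπ := Real.pi_pos
  have intA : IntegrableOn (fun t => besselI0 t ^ 2 * besselK0 t ^ 4 * t) (Ioi (0:ℝ)) := by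
    have := f_integrable 2 (Or.inr rfl) 1 (Or.inl rfl)
    simpa using this
  have intB : IntegrableOn (fun t => besselI0 t * besselK0 t ^ 4 * t) (Ioi (0:ℝ)) := by
    have := f_integrable 1 (Or.inl rfl) 1 (Or.inl rfl)
    simpa using this
  have intC : IntegrableOn (fun t => besselI0 t * besselK0 t ^ 4 * t ^ 3) (Ioi (0:ℝ)) := by
    have := f_integrable 1 (Or.inl rfl) 3 (Or.inr rfl)
    simpa using this
  set C : ℝ := ∫ t in Set.Ioi (0:ℝ), besselI0 t * (besselK0 t)^4 * t^3 with hCdef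
  have hCpos : 0 < C := by
    rw [hCdef, setIntegral_pos_iff_support_of_nonneg_ae]
    · have hsub : Ioi (0:ℝ) ⊆ Function.support (fun t => besselI0 t * besselK0 t^4 * t^3) ∩ Ioi 0 := by
        intro t ht
        refine ⟨?_, ht⟩
        have ht0 : (0:ℝ) < t := ht
        have h1 := I0_ge_one ht0.le
        have h2 := K0_pos ht0
        simp only [Function.mem_support]
        positivity
      calc (0:ENNReal) < volume (Ioi (0:ℝ)) := by simp [Real.volume_Ioi]
        _ ≤ _ := measure_mono hsub
    · filter_upwards [ae_restrict_mem measurableSet_Ioi] with t ht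
      have ht0 : (0:ℝ) < t := ht
      have h1 := I0_ge_one ht0.le
      have h2 := K0_nonneg t
      have h3 : (0:ℝ) ≤ besselI0 t := by linarith
      positivity
    · exact intC
  have hdiff : p51 - p5'0 = (30 / π^4) *
      ∫ t in Set.Ioi (0:ℝ), (besselI0 t ^ 2 * besselK0 t ^ 4 * t - besselI0 t * besselK0 t ^ 4 * t) := by
    rw [h1, h0, integral_sub intA intB]
    ring
  have hmono : (1/4) * C ≤
      ∫ t in Set.Ioi (0:ℝ), (besselI0 t ^ 2 * besselK0 t ^ 4 * t - besselI0 t * besselK0 t ^ 4 * t) := by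
    rw [hCdef, ← MeasureTheory.integral_const_mul]
    apply setIntegral_mono_on (intC.const_mul (1/4)) (intA.sub intB) measurableSet_Ioi
    intro t ht
    simp only [Pi.sub_apply]
    have ht0 : (0:ℝ) < t := ht
    have hI := I0_lower ht0.le
    have hI0 : (0:ℝ) ≤ besselI0 t := by nlinarith
    have hK : (0:ℝ) ≤ besselK0 t ^ 4 := by positivity
    have key : 0 ≤ (besselI0 t - 1 - t^2/4) * (besselI0 t * (besselK0 t^4 * t)) :=
      mul_nonneg (by nlinarith) (by positivity)
    nlinarith
  have hge : p51 - p5'0 ≥ (15 / (2 * π^4)) * C := by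
    rw [hdiff]
    have h30 : (0:ℝ) < 30 / π^4 := by positivity
    calc (15 / (2 * π^4)) * C = (30 / π^4) * ((1/4) * C) := by ring
      _ ≤ (30 / π^4) * ∫ t in Set.Ioi (0:ℝ),
          (besselI0 t ^ 2 * besselK0 t ^ 4 * t - besselI0 t * besselK0 t ^ 4 * t) :=
        mul_le_mul_of_nonneg_left hmono h30.le
  have hpos : 0 < (15 / (2 * π^4)) * C := by
    have : (0:ℝ) < 15 / (2 * π^4) := by positivity
    positivity
  exact ⟨by linarith, hge, hpos⟩
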